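/- arXiv:0802.4313 — 2 statements merged into one kernel-verified Lean document; each statement's English description precedes it below -/
import Mathlib

section
/- Let d and d̃ be the Riemannian distance functions of conformal metrics g and g̃ = h²g on a surface, with h continuous and positive. Then for each point s₀, lim_{s→s₀} [log d̃(s,s₀) - log d(s,s₀)] = log h(s₀); equivalently d̃(s,s₀)/d(s,s₀) → h(s₀) as s → s₀. -/
open Filter

/-- The length of a path `γ` in the conformal metric `g̃ = h² g` (with `g` euclidean on
`ℝ²`): `∫₀¹ h(γ(t)) ‖γ'(t)‖ dt`. -/
noncomputable def confLength (h : ℝ × ℝ → ℝ) (γ : ℝ → ℝ × ℝ) : ℝ :=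
  ∫ t in (0 : ℝ)..1, h (γ t) * ‖deriv γ t‖

/-- The Riemannian (geodesic) distance `d̃` of the conformal metric `g̃ = h² g`:
the infimum of lengths of `C¹` paths joining the two points. -/
noncomputable def confDist (h : ℝ × ℝ → ℝ) (a b : ℝ × ℝ) : ℝ :=
  sInf {L : ℝ | ∃ γ : ℝ → ℝ × ℝ, ContDiff ℝ 1 γ ∧ γ 0 = a ∧ γ 1 = b ∧ L = confLength h γ}

open intervalIntegral

lemma deriv_cont {γ : ℝ → ℝ × ℝ} (hγ : ContDiff ℝ 1 γ) : Continuous (deriv γ) :=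
  hγ.continuous_deriv le_rfl

lemma norm_sub_le_integral {γ : ℝ → ℝ × ℝ} (hγ : ContDiff ℝ 1 γ) {a b : ℝ} (hab : a ≤ b) :
    ‖γ b - γ a‖ ≤ ∫ t in a..b, ‖deriv γ t‖ := by
  have h1 : (∫ t in a..b, deriv γ t) = γ b - γ a :=
    integral_deriv_eq_sub (fun t _ => (hγ.differentiable one_ne_zero).differentiableAt)
      ((deriv_cont hγ).intervalIntegrable a b)
  rw [← h1]
  exact norm_integral_le_integral_norm hab

lemma weighted_lower {h : ℝ × ℝ → ℝ} (hcont : Continuous h) {γ : ℝ → ℝ × ℝ}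
    (hγ : ContDiff ℝ 1 γ) {a b m : ℝ} (hab : a ≤ b) (hm : 0 ≤ m)
    (hbd : ∀ t ∈ Set.Icc a b, m ≤ h (γ t)) :
    m * ‖γ b - γ a‖ ≤ ∫ t in a..b, h (γ t) * ‖deriv γ t‖ := by
  have hint1 : IntervalIntegrable (fun t => m * ‖deriv γ t‖) MeasureTheory.volume a b :=
    (continuous_const.mul (deriv_cont hγ).norm).intervalIntegrable a b
  have hint2 : IntervalIntegrable (fun t => h (γ t) * ‖deriv γ t‖) MeasureTheory.volume a b :=
    ((hcont.comp hγ.continuous).mul (deriv_cont hγ).norm).intervalIntegrable a b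
  calc m * ‖γ b - γ a‖ ≤ m * ∫ t in a..b, ‖deriv γ t‖ :=
        mul_le_mul_of_nonneg_left (norm_sub_le_integral hγ hab) hm
    _ = ∫ t in a..b, m * ‖deriv γ t‖ := by rw [intervalIntegral.integral_const_mul]
    _ ≤ ∫ t in a..b, h (γ t) * ‖deriv γ t‖ := by
        apply intervalIntegral.integral_mono_on hab hint1 hint2
        intro t ht
        exact mul_le_mul_of_nonneg_right (hbd t ht) (norm_nonneg _)

lemma confLength_nonneg {h : ℝ × ℝ → ℝ} (hpos : ∀ p, 0 < h p) (γ : ℝ → ℝ × ℝ) :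
    0 ≤ confLength h γ :=
  intervalIntegral.integral_nonneg zero_le_one
    (fun t _ => mul_nonneg (hpos _).le (norm_nonneg _))

lemma confDist_bddBelow (h : ℝ × ℝ → ℝ) (hpos : ∀ p, 0 < h p) (a b : ℝ × ℝ) :
    BddBelow {L : ℝ | ∃ γ : ℝ → ℝ × ℝ, ContDiff ℝ 1 γ ∧ γ 0 = a ∧ γ 1 = b ∧ L = confLength h γ} := by
  refine ⟨0, ?_⟩
  rintro L ⟨γ, _, _, _, rfl⟩
  exact confLength_nonneg hpos γ

/-- the straight segment from a to b -/
lemma seg_mem (h : ℝ × ℝ → ℝ) (a b : ℝ × ℝ) :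
    confLength h (fun t : ℝ => a + t • (b - a)) ∈
      {L : ℝ | ∃ γ : ℝ → ℝ × ℝ, ContDiff ℝ 1 γ ∧ γ 0 = a ∧ γ 1 = b ∧ L = confLength h γ} := by
  refine ⟨_, ?_, by simp, by simp, rfl⟩
  exact contDiff_const.add (contDiff_id.smul contDiff_const)

lemma seg_deriv (a b : ℝ × ℝ) (t : ℝ) : deriv (fun t : ℝ => a + t • (b - a)) t = b - a := by
  have : HasDerivAt (fun t : ℝ => a + t • (b - a)) (b - a) t := by
    simpa using ((hasDerivAt_id t).smul_const (b - a)).const_add a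
  exact this.deriv

lemma confDist_upper {h : ℝ × ℝ → ℝ} (hcont : Continuous h) (hpos : ∀ p, 0 < h p)
    {s₀ s : ℝ × ℝ} {r M : ℝ} (hM : ∀ p, dist p s₀ ≤ r → h p ≤ M)
    (hs : dist s s₀ ≤ r) : confDist h s s₀ ≤ M * dist s s₀ := by
  set γ : ℝ → ℝ × ℝ := fun t => s + t • (s₀ - s) with hγdef
  have hlen : confLength h γ ≤ M * dist s s₀ := by
    have hd : ∀ t : ℝ, deriv γ t = s₀ - s := seg_deriv s s₀
    have hnorm : ‖s₀ - s‖ = dist s s₀ := by rw [dist_eq_norm, norm_sub_rev]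
    have hb : ∀ t ∈ Set.Icc (0:ℝ) 1, h (γ t) * ‖deriv γ t‖ ≤ M * ‖s₀ - s‖ := by
      intro t ht
      rw [hd t]
      refine mul_le_mul_of_nonneg_right ?_ (norm_nonneg _)
      apply hM
      have : γ t - s₀ = (1 - t) • (s - s₀) := by
        simp only [hγdef]
        module
      have hdist : dist (γ t) s₀ = (1 - t) * dist s s₀ := by
        rw [dist_eq_norm, this, norm_smul, Real.norm_eq_abs,
          abs_of_nonneg (by linarith [ht.2]), ← dist_eq_norm]
      rw [hdist]
      calc (1 - t) * dist s s₀ ≤ 1 * dist s s₀ := by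
            apply mul_le_mul_of_nonneg_right (by linarith [ht.1]) dist_nonneg
        _ ≤ r := by linarith
    calc confLength h γ ≤ ∫ t in (0:ℝ)..1, M * ‖s₀ - s‖ := by
          apply intervalIntegral.integral_mono_on zero_le_one ?_ ?_ hb
          · exact ((hcont.comp (by continuity : Continuous γ)).mul
              (by simp only [hd]; exact continuous_const.norm)).intervalIntegrable 0 1
          · exact continuous_const.intervalIntegrable 0 1
      _ = M * dist s s₀ := by simp [hnorm]
  exact le_trans (csInf_le (confDist_bddBelow h hpos s s₀) (seg_mem h s s₀)) hlen

lemma confLength_lower {h : ℝ × ℝ → ℝ} (hcont : Continuous h) (hpos : ∀ p, 0 < h p)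
    {s₀ s : ℝ × ℝ} {r m : ℝ} (hr : 0 < r) (hm : 0 ≤ m)
    (hball : ∀ p, dist p s₀ ≤ r → m ≤ h p)
    {γ : ℝ → ℝ × ℝ} (hγ : ContDiff ℝ 1 γ) (h0 : γ 0 = s) (h1 : γ 1 = s₀)
    (hs : dist s s₀ ≤ r / 2) :
    m * dist s s₀ ≤ confLength h γ := by
  have fcont : Continuous (fun t => dist (γ t) s₀) := (hγ.continuous.dist continuous_const)
  by_cases hcase : ∀ t ∈ Set.Icc (0:ℝ) 1, dist (γ t) s₀ ≤ r
  · have hw := weighted_lower hcont hγ zero_le_one hm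
      (fun t ht => hball _ (hcase t ht))
    have h2 : ‖γ 1 - γ 0‖ = dist s s₀ := by
      rw [h0, h1, norm_sub_rev, ← dist_eq_norm]
    rw [h2] at hw
    exact hw
  · push_neg at hcase
    obtain ⟨t₀, ht₀, ht₀r⟩ := hcase
    set K : Set ℝ := Set.Icc (0:ℝ) 1 ∩ (fun t => dist (γ t) s₀) ⁻¹' Set.Ici r with hK
    have hKne : K.Nonempty := ⟨t₀, ht₀, ht₀r.le⟩
    have hKc : IsCompact K := isCompact_Icc.inter_right (isClosed_Ici.preimage fcont)
    set T := sInf K with hT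
    have hTK : T ∈ K := hKc.sInf_mem hKne
    obtain ⟨⟨hT0, hT1⟩, hTr⟩ := hTK
    have hTr' : r ≤ dist (γ T) s₀ := hTr
    have hlt : ∀ t, 0 ≤ t → t < T → dist (γ t) s₀ < r := by
      intro t h0t htT
      by_contra hc
      push_neg at hc
      exact absurd (csInf_le hKc.bddBelow ⟨⟨h0t, htT.le.trans hT1⟩, hc⟩) (not_le.mpr htT)
    have hTpos : 0 < T := by
      rcases lt_or_ge 0 T with h | h
      · exact h
      · exfalso
        have : T = 0 := le_antisymm h hT0
        rw [this, h0] at hTr'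
        linarith
    -- dist (γ T) s₀ ≤ r by left continuity
    have hfT : dist (γ T) s₀ ≤ r := by
      refine le_of_tendsto (f := fun t => dist (γ t) s₀) (x := nhdsWithin T (Set.Iio T))
        (fcont.continuousAt.mono_left nhdsWithin_le_nhds) ?_
      filter_upwards [Ioo_mem_nhdsLT_of_mem (Set.mem_Ioc.mpr ⟨hTpos, le_rfl⟩)] with t ht
      exact (hlt t ht.1.le ht.2).le
    have hbd : ∀ t ∈ Set.Icc (0:ℝ) T, dist (γ t) s₀ ≤ r := by
      intro t ⟨h1t, h2t⟩
      rcases lt_or_eq_of_le h2t with h | h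
      · exact (hlt t h1t h).le
      · rw [h]; exact hfT
    have hseg : m * ‖γ T - γ 0‖ ≤ ∫ t in (0:ℝ)..T, h (γ t) * ‖deriv γ t‖ :=
      weighted_lower hcont hγ hT0 hm (fun t ht => hball _ (hbd t ht))
    have hdistT : dist s s₀ ≤ ‖γ T - γ 0‖ := by
      have h3 : dist (γ T) s₀ ≤ dist (γ T) s + dist s s₀ := dist_triangle _ _ _
      have : ‖γ T - γ 0‖ = dist (γ T) s := by rw [h0, dist_eq_norm]
      rw [this]
      linarith
    have hint : ∀ a b : ℝ, IntervalIntegrable (fun t => h (γ t) * ‖deriv γ t‖)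
        MeasureTheory.volume a b := fun a b =>
      ((hcont.comp hγ.continuous).mul (deriv_cont hγ).norm).intervalIntegrable a b
    have hsplit : confLength h γ = (∫ t in (0:ℝ)..T, h (γ t) * ‖deriv γ t‖)
        + ∫ t in T..1, h (γ t) * ‖deriv γ t‖ := by
      rw [confLength, ← intervalIntegral.integral_add_adjacent_intervals (hint 0 T) (hint T 1)]
    have htail : 0 ≤ ∫ t in T..1, h (γ t) * ‖deriv γ t‖ :=
      intervalIntegral.integral_nonneg hT1 (fun t _ => mul_nonneg (hpos _).le (norm_nonneg _))
    have : m * dist s s₀ ≤ m * ‖γ T - γ 0‖ := mul_le_mul_of_nonneg_left hdistT hm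
    linarith

lemma confDist_lower {h : ℝ × ℝ → ℝ} (hcont : Continuous h) (hpos : ∀ p, 0 < h p)
    {s₀ s : ℝ × ℝ} {r m : ℝ} (hr : 0 < r) (hm : 0 ≤ m)
    (hball : ∀ p, dist p s₀ ≤ r → m ≤ h p) (hs : dist s s₀ ≤ r / 2) :
    m * dist s s₀ ≤ confDist h s s₀ := by
  apply le_csInf ⟨_, seg_mem h s s₀⟩
  rintro L ⟨γ, hγ, h0, h1, rfl⟩
  exact confLength_lower hcont hpos hr hm hball hγ h0 h1 hs

/-- Let `d` and `d̃` be the distance functions of the conformal metrics `g` (euclidean)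
and `g̃ = h² g`, with `h` continuous and positive.  Then
`d̃(s,s₀)/d(s,s₀) → h(s₀)` as `s → s₀`; equivalently
`log d̃(s,s₀) - log d(s,s₀) → log h(s₀)`. -/
theorem conformal_distance_ratio (h : ℝ × ℝ → ℝ) (hcont : Continuous h)
    (hpos : ∀ p, 0 < h p) (s₀ : ℝ × ℝ) :
    Tendsto (fun s => confDist h s s₀ / dist s s₀) (nhdsWithin s₀ {s₀}ᶜ) (nhds (h s₀)) ∧
    Tendsto (fun s => Real.log (confDist h s s₀) - Real.log (dist s s₀))
      (nhdsWithin s₀ {s₀}ᶜ) (nhds (Real.log (h s₀))) := by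
  -- key bounds
  have key : ∀ ε > 0, ∃ δ > 0, ∀ s, s ≠ s₀ → dist s s₀ < δ →
      |confDist h s s₀ / dist s s₀ - h s₀| < ε := by
    intro ε hε
    set ε' := min (ε / 2) (h s₀ / 2) with hε'
    have hε'pos : 0 < ε' := lt_min (by linarith) (by linarith [hpos s₀])
    have hε'lt : ε' < ε := lt_of_le_of_lt (min_le_left _ _) (by linarith)
    have hε'le : ε' ≤ h s₀ / 2 := min_le_right _ _
    obtain ⟨r, hr, hrball⟩ : ∃ r > 0, ∀ p, dist p s₀ ≤ r → |h p - h s₀| ≤ ε' := by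
      obtain ⟨δ, hδ, hδ'⟩ := Metric.continuous_iff.mp hcont s₀ ε' hε'pos
      exact ⟨δ / 2, by linarith, fun p hp => by
        have := hδ' p (show dist p s₀ < δ by linarith)
        rw [Real.dist_eq] at this
        exact this.le⟩
    refine ⟨r / 2, by linarith, fun s hs hsd => ?_⟩
    have hdpos : 0 < dist s s₀ := dist_pos.mpr hs
    have hlow : (h s₀ - ε') * dist s s₀ ≤ confDist h s s₀ :=
      confDist_lower hcont hpos hr (by linarith [hpos s₀])
        (fun p hp => by have := hrball p hp; have := abs_le.mp this; linarith)
        hsd.le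
    have hup : confDist h s s₀ ≤ (h s₀ + ε') * dist s s₀ :=
      confDist_upper hcont hpos
        (fun p hp => by have := abs_le.mp (hrball p hp); linarith)
        (by linarith)
    rw [abs_lt]
    constructor
    · have : h s₀ - ε' ≤ confDist h s s₀ / dist s s₀ := (le_div_iff₀ hdpos).mpr hlow
      linarith
    · have : confDist h s s₀ / dist s s₀ ≤ h s₀ + ε' := (div_le_iff₀ hdpos).mpr hup
      linarith
  have part1 : Tendsto (fun s => confDist h s s₀ / dist s s₀) (nhdsWithin s₀ {s₀}ᶜ)
      (nhds (h s₀)) := by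
    rw [Metric.tendsto_nhdsWithin_nhds]
    intro ε hε
    obtain ⟨δ, hδ, hδ'⟩ := key ε hε
    exact ⟨δ, hδ, fun s hs hsd => by rw [Real.dist_eq]; exact hδ' s hs hsd⟩
  refine ⟨part1, ?_⟩
  -- eventually positive
  obtain ⟨δ, hδ, hδ'⟩ := key (h s₀ / 2) (by linarith [hpos s₀])
  have heq : ∀ᶠ s in nhdsWithin s₀ {s₀}ᶜ,
      Real.log (confDist h s s₀ / dist s s₀)
        = Real.log (confDist h s s₀) - Real.log (dist s s₀) := by
    filter_upwards [mem_nhdsWithin_of_mem_nhds (Metric.ball_mem_nhds s₀ hδ),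
      self_mem_nhdsWithin] with s hsball hs
    have hsne : s ≠ s₀ := hs
    have hdpos : 0 < dist s s₀ := dist_pos.mpr hsne
    have hsd : dist s s₀ < δ := by simpa [Metric.mem_ball] using hsball
    have hratio := hδ' s hsne hsd
    have hcpos : 0 < confDist h s s₀ := by
      have := abs_lt.mp hratio
      have h1 : h s₀ / 2 < confDist h s s₀ / dist s s₀ := by linarith [this.1]
      have := (lt_div_iff₀ hdpos).mp h1
      nlinarith [hpos s₀]
    rw [Real.log_div hcpos.ne' hdpos.ne']
  exact Tendsto.congr' heq ((Real.continuousAt_log (hpos s₀).ne').tendsto.comp part1)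
end

section
/- Suppose G and G̃ are two symmetric Green functions on a closed surface S (for metrics g and g̃ = h²g respectively) satisfying: Δ_g G(·,s₀) = -1/A on S∖{s₀} and Δ_g G̃(·,s₀) = -h²/Ã on S∖{s₀} (distributionally, with unit point source at s₀), ∫_S G(s,s₀) Ω(s) = 0, ∫_S G̃(s,s₀) h²Ω(s) = 0, where A = ∫_S Ω and Ã = ∫_S h²Ω. Then G̃(s,s₀) - G(s,s₀) = -(1/Ã)(u(s) + u(s₀)) + (1/Ã²)∫_S h² u Ω, where u := Δ_g⁻¹(h² - Ã/A·1) is the g-potential of the relative area density (normalized so ∫_S u Ω = 0). -/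
open MeasureTheory

/-- Okikiolu's conformal transformation formula for Green functions on a closed surface.
`μ` is the area measure of `g` (total area `A = μ S`), and `h²μ` that of `g̃ = h²g`
(total area `Ã`).  `G`, `G̃` are the Green functions of `Δ_g`, `Δ_g̃`: symmetric, with
zero mean against the respective area forms, and such that for fixed sources `s₀, s₁`
the difference `(G̃(·,s₀) - G̃(·,s₁)) - (G(·,s₀) - G(·,s₁))` is constant off the sources
(both sides being harmonic with the same logarithmic singularities).  With
`u = Δ_g⁻¹(h² - Ã/A·1)` realized via `u(s) = ∫ G(s,r) h(r)² dμ(r)`, one has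
`G̃(s,s₀) - G(s,s₀) = -(1/Ã)(u(s) + u(s₀)) + (1/Ã²)∫ h² u dμ`. -/
theorem okikiolu_conformal_green {S : Type*} [MeasurableSpace S] (μ : Measure S)
    [IsFiniteMeasure μ] (hatom : ∀ s : S, μ {s} = 0)
    (h : S → ℝ) (hmeas : Measurable h) (hpos : ∀ s, 0 < h s)
    (G Gt : S → S → ℝ)
    (hGsym : ∀ a b, G a b = G b a) (hGtsym : ∀ a b, Gt a b = Gt b a)
    (hGint : ∀ b, Integrable (fun s => G s b) μ)
    (hGh2int : ∀ b, Integrable (fun s => G s b * (h s) ^ 2) μ)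
    (hGth2int : ∀ b, Integrable (fun s => Gt s b * (h s) ^ 2) μ)
    (hGavg : ∀ b, ∫ s, G s b ∂μ = 0)
    (hGtavg : ∀ b, ∫ s, Gt s b * (h s) ^ 2 ∂μ = 0)
    (hconst : ∀ s₀ s₁, s₀ ≠ s₁ → ∃ c : ℝ, ∀ s, s ≠ s₀ → s ≠ s₁ →
      (Gt s s₀ - Gt s s₁) - (G s s₀ - G s s₁) = c)
    (u : S → ℝ) (hu : ∀ s, u s = ∫ r, G s r * (h r) ^ 2 ∂μ)
    (huint : Integrable (fun r => (h r) ^ 2 * u r) μ)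
    (At : ℝ) (hAt : At = ∫ s, (h s) ^ 2 ∂μ) (hAtpos : 0 < At) :
    ∀ s s₀, s ≠ s₀ →
      Gt s s₀ - G s s₀ =
        -(1 / At) * (u s + u s₀) + (1 / At ^ 2) * ∫ r, (h r) ^ 2 * u r ∂μ := by
  intro s s₀ hss₀
  have hAtne : At ≠ 0 := ne_of_gt hAtpos
  have hh2int : Integrable (fun s => (h s) ^ 2) μ := by
    by_contra hc
    rw [integral_undef hc] at hAt
    exact hAtne hAt
  have hae2 : ∀ a b : S, ∀ᵐ x ∂μ, x ≠ a ∧ x ≠ b := by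
    intro a b
    have hz : μ ({a, b} : Set S) = 0 := by
      rw [Set.insert_eq]
      exact measure_union_null (hatom a) (hatom b)
    filter_upwards [measure_eq_zero_iff_ae_notMem.mp hz] with x hx
    simp only [Set.mem_insert_iff, Set.mem_singleton_iff, not_or] at hx
    exact hx
  have hu' : ∀ b, u b = ∫ r, G r b * (h r) ^ 2 ∂μ := by
    intro b
    rw [hu b, show (fun r => G b r * (h r) ^ 2) = fun r => G r b * (h r) ^ 2 from
      funext fun r => by rw [hGsym]]
  have hGtavg' : ∀ b, ∫ r, Gt b r * (h r) ^ 2 ∂μ = 0 := by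
    intro b
    rw [show (fun r => Gt b r * (h r) ^ 2) = fun r => Gt r b * (h r) ^ 2 from
      funext fun r => by rw [hGtsym]]
    exact hGtavg b
  have hGtint' : ∀ b, Integrable (fun r => Gt b r * (h r) ^ 2) μ := by
    intro b
    have := hGth2int b
    rwa [show (fun r => Gt r b * (h r) ^ 2) = fun r => Gt b r * (h r) ^ 2 from
      funext fun r => by rw [hGtsym]] at this
  have hGint' : ∀ b, Integrable (fun r => G b r * (h r) ^ 2) μ := by
    intro b
    have := hGh2int b
    rwa [show (fun r => G r b * (h r) ^ 2) = fun r => G b r * (h r) ^ 2 from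
      funext fun r => by rw [hGsym]] at this
  have key : ∀ a b, a ≠ b → ∀ x, x ≠ a → x ≠ b →
      (Gt x a - Gt x b) - (G x a - G x b) = (u b - u a) / At := by
    intro a b hab
    obtain ⟨c, hc⟩ := hconst a b hab
    have hIGt : ∫ x, (Gt x a * (h x) ^ 2 - Gt x b * (h x) ^ 2) ∂μ = 0 := by
      rw [integral_sub (hGth2int a) (hGth2int b), hGtavg a, hGtavg b, sub_zero]
    have hIG : ∫ x, (G x a * (h x) ^ 2 - G x b * (h x) ^ 2) ∂μ = u a - u b := by
      rw [integral_sub (hGh2int a) (hGh2int b), ← hu' a, ← hu' b]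
    have hintGt : Integrable (fun x => Gt x a * (h x) ^ 2 - Gt x b * (h x) ^ 2) μ :=
      (hGth2int a).sub (hGth2int b)
    have hintG : Integrable (fun x => G x a * (h x) ^ 2 - G x b * (h x) ^ 2) μ :=
      (hGh2int a).sub (hGh2int b)
    have hsplit : ∫ x, ((Gt x a * (h x) ^ 2 - Gt x b * (h x) ^ 2)
        - (G x a * (h x) ^ 2 - G x b * (h x) ^ 2)) ∂μ = u b - u a := by
      rw [integral_sub hintGt hintG, hIGt, hIG]
      ring
    have hae : ∀ᵐ x ∂μ, ((Gt x a * (h x) ^ 2 - Gt x b * (h x) ^ 2)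
        - (G x a * (h x) ^ 2 - G x b * (h x) ^ 2)) = c * (h x) ^ 2 := by
      filter_upwards [hae2 a b] with x hx
      have := hc x hx.1 hx.2
      nlinarith [this]
    have hI : u b - u a = c * At := by
      rw [← hsplit, integral_congr_ae hae, integral_const_mul, ← hAt]
    have hcval : c = (u b - u a) / At := by
      field_simp
      linarith [hI]
    intro x hxa hxb
    rw [hc x hxa hxb, hcval]
  set I := ∫ r, (h r) ^ 2 * u r ∂μ with hI
  have hintA : Integrable (fun r => (Gt s s₀ - G s s₀) * (h r) ^ 2) μ :=
    hh2int.const_mul _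
  have hintB : Integrable (fun r => Gt s r * (h r) ^ 2 - G s r * (h r) ^ 2) μ :=
    (hGtint' s).sub (hGint' s)
  have hL : ∫ r, ((Gt s s₀ - G s s₀) * (h r) ^ 2
      - (Gt s r * (h r) ^ 2 - G s r * (h r) ^ 2)) ∂μ
      = (Gt s s₀ - G s s₀) * At + u s := by
    rw [integral_sub hintA hintB, integral_sub (hGtint' s) (hGint' s),
      integral_const_mul, ← hAt, hGtavg' s, ← hu s]
    ring
  have hintC : Integrable (fun r => (1 / At) * ((h r) ^ 2 * u r)) μ :=
    huint.const_mul _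
  have hintD : Integrable (fun r => (u s₀ / At) * (h r) ^ 2) μ :=
    hh2int.const_mul _
  have hR : ∫ r, ((1 / At) * ((h r) ^ 2 * u r) - (u s₀ / At) * (h r) ^ 2) ∂μ
      = (1 / At) * I - (u s₀ / At) * At := by
    rw [integral_sub hintC hintD, integral_const_mul, integral_const_mul, ← hAt, hI]
  have haeq : ∀ᵐ r ∂μ, ((Gt s s₀ - G s s₀) * (h r) ^ 2
      - (Gt s r * (h r) ^ 2 - G s r * (h r) ^ 2))
      = ((1 / At) * ((h r) ^ 2 * u r) - (u s₀ / At) * (h r) ^ 2) := by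
    filter_upwards [hae2 s s₀] with r hr
    have hk := key s₀ r (Ne.symm hr.2) s hss₀ (Ne.symm hr.1)
    have h1 : ((Gt s s₀ - Gt s r) - (G s s₀ - G s r)) * (h r) ^ 2
        = ((u r - u s₀) / At) * (h r) ^ 2 := by rw [hk]
    have h2 : ((u r - u s₀) / At) * (h r) ^ 2
        = (1 / At) * ((h r) ^ 2 * u r) - (u s₀ / At) * (h r) ^ 2 := by
      field_simp
    nlinarith [h1, h2]
  have hmain : (Gt s s₀ - G s s₀) * At + u s = (1 / At) * I - (u s₀ / At) * At := by
    rw [← hL, integral_congr_ae haeq, hR]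
  have hfin : (Gt s s₀ - G s s₀) * At ^ 2 = -(u s + u s₀) * At + I := by
    have h3 : ((Gt s s₀ - G s s₀) * At + u s) * At
        = ((1 / At) * I - (u s₀ / At) * At) * At := by rw [hmain]
    have h4 : ((1 / At) * I - (u s₀ / At) * At) * At = I - u s₀ * At ^ 2 / At := by
      field_simp
    have h5 : u s₀ * At ^ 2 / At = u s₀ * At := by
      field_simp
    nlinarith [h3, h4, h5]
  have h6 : Gt s s₀ - G s s₀ = (-(u s + u s₀) * At + I) / At ^ 2 := by
    rw [eq_div_iff (pow_ne_zero 2 hAtne)]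
    exact hfin
  rw [h6]
  field_simp
end
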